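/- Let G be a connected graph, u, v ∈ V(G), and P a path in G from u to v. Then there exists an isomorphism φ : G_{\{u\}} → G_{\{v\}} such that ρ(φ(w, S)) = w for all vertices (w, S) of G_{\{u\}}, and φ(w, S) = (w, S) whenever w does not lie on P. -/

import Mathlib

/-- The vertices of the CFI-type graph `G_U`: pairs `(v, S)` with `v ∈ V(G)`
and `S` a set of edges of `G` incident to `v` with `|S| ≡ |{v} ∩ U| (mod 2)`. -/
def CFIVert {V : Type*} [DecidableEq V] (G : SimpleGraph V) (U : Finset V) : Type _ :=
  {p : V × Finset (Sym2 V) //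
    (∀ e ∈ p.2, e ∈ G.edgeSet ∧ p.1 ∈ e) ∧
    p.2.card % 2 = (if p.1 ∈ U then 1 else 0)}

/-- The CFI-type graph `G_U`: `(v, S)` and `(u, T)` are adjacent iff
`uv ∈ E(G)` and `uv ∉ S △ T`. -/
def cfiGraph {V : Type*} [DecidableEq V] (G : SimpleGraph V) (U : Finset V) :
    SimpleGraph (CFIVert G U) where
  Adj p q := G.Adj p.val.1 q.val.1 ∧
    (s(p.val.1, q.val.1) ∈ p.val.2 ↔ s(p.val.1, q.val.1) ∈ q.val.2)
  symm := by
    refine ⟨?_⟩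
    rintro p q ⟨h1, h2⟩
    refine ⟨h1.symm, ?_⟩
    rw [Sym2.eq_swap]
    exact h2.symm
  loopless := by
    refine ⟨?_⟩
    rintro p ⟨h, -⟩
    exact G.loopless.irrefl _ h

open scoped symmDiff

lemma card_symmDiff_mod_two {α : Type*} [DecidableEq α] (s t : Finset α) :
    (s ∆ t).card % 2 = (s.card + t.card) % 2 := by
  have hd : Disjoint (s \ t) (t \ s) := disjoint_sdiff_sdiff
  have h1 : (s ∆ t).card = (s \ t).card + (t \ s).card := by
    rw [symmDiff_def, Finset.sup_eq_union, Finset.card_union_of_disjoint hd]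
  have h2 := Finset.card_sdiff_add_card_inter s t
  have h3 := Finset.card_sdiff_add_card_inter t s
  have h4 : (s ∩ t).card = (t ∩ s).card := by rw [Finset.inter_comm]
  omega

/-- The twist function on CFI vertices: `(w, S) ↦ (w, S ∆ T w)`. -/
def CFIVert.twist {V : Type*} [DecidableEq V] {G : SimpleGraph V} {U U' : Finset V}
    (T : V → Finset (Sym2 V))
    (hT : ∀ w, ∀ e ∈ T w, e ∈ G.edgeSet ∧ w ∈ e)
    (hpar : ∀ w, ((T w).card + (if w ∈ U then 1 else 0)) % 2 = (if w ∈ U' then 1 else 0))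
    (x : CFIVert G U) : CFIVert G U' :=
  ⟨(x.val.1, x.val.2 ∆ T x.val.1), by
    obtain ⟨⟨w, S⟩, hmem, hpar'⟩ := x
    refine ⟨?_, ?_⟩
    · intro e he
      rw [Finset.mem_symmDiff] at he
      rcases he with ⟨h1, -⟩ | ⟨h1, -⟩
      · exact hmem e h1
      · exact hT w e h1
    · simp only at hpar' ⊢
      rw [card_symmDiff_mod_two]
      have := hpar w
      omega⟩

@[simp] lemma CFIVert.twist_val {V : Type*} [DecidableEq V] {G : SimpleGraph V}
    {U U' : Finset V} (T : V → Finset (Sym2 V)) (hT) (hpar) (x : CFIVert G U) :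
    (CFIVert.twist (U' := U') T hT hpar x).val = (x.val.1, x.val.2 ∆ T x.val.1) := rfl

/-- The twist isomorphism between CFI graphs. -/
def cfiTwistIso {V : Type*} [DecidableEq V] {G : SimpleGraph V} {U U' : Finset V}
    (T : V → Finset (Sym2 V))
    (hT : ∀ w, ∀ e ∈ T w, e ∈ G.edgeSet ∧ w ∈ e)
    (hpar : ∀ w, ((T w).card + (if w ∈ U then 1 else 0)) % 2 = (if w ∈ U' then 1 else 0))
    (hTE : ∀ w w', G.Adj w w' → (s(w, w') ∈ T w ↔ s(w, w') ∈ T w')) :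
    cfiGraph G U ≃g cfiGraph G U' where
  toFun := CFIVert.twist T hT hpar
  invFun := CFIVert.twist T hT (fun w => by have := hpar w; split_ifs at * <;> omega)
  left_inv := by
    intro x
    apply Subtype.ext
    show (x.val.1, (x.val.2 ∆ T x.val.1) ∆ T x.val.1) = x.val
    rw [symmDiff_symmDiff_cancel_right]
  right_inv := by
    intro x
    apply Subtype.ext
    show (x.val.1, (x.val.2 ∆ T x.val.1) ∆ T x.val.1) = x.val
    rw [symmDiff_symmDiff_cancel_right]
  map_rel_iff' := by
    intro x y
    show (G.Adj x.val.1 y.val.1 ∧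
        (s(x.val.1, y.val.1) ∈ x.val.2 ∆ T x.val.1 ↔ s(x.val.1, y.val.1) ∈ y.val.2 ∆ T y.val.1)) ↔
      (G.Adj x.val.1 y.val.1 ∧ (s(x.val.1, y.val.1) ∈ x.val.2 ↔ s(x.val.1, y.val.1) ∈ y.val.2))
    constructor
    · rintro ⟨ha, hb⟩
      refine ⟨ha, ?_⟩
      have hte := hTE _ _ ha
      simp only [Finset.mem_symmDiff] at hb
      tauto
    · rintro ⟨ha, hb⟩
      refine ⟨ha, ?_⟩
      have hte := hTE _ _ ha
      simp only [Finset.mem_symmDiff]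
      tauto

lemma sym2_eq_imp {V : Type*} {w w' a b : V} (h : s(w, w') = s(a, b)) : w = a ∨ w = b := by
  rw [Sym2.eq_iff] at h
  tauto

/-- Single-edge twist. -/
lemma cfi_edge_iso {V : Type*} [DecidableEq V] {G : SimpleGraph V} {a b : V}
    (hab : G.Adj a b) :
    ∃ φ : cfiGraph G {a} ≃g cfiGraph G {b},
      (∀ x : CFIVert G {a}, ((φ x) : CFIVert G {b}).val.1 = x.val.1) ∧
      ∀ x : CFIVert G {a}, x.val.1 ≠ a → x.val.1 ≠ b →
        ((φ x) : CFIVert G {b}).val = x.val := by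
  set T : V → Finset (Sym2 V) := fun w => if w = a ∨ w = b then {s(a, b)} else ∅ with hTdef
  have hT : ∀ w, ∀ e ∈ T w, e ∈ G.edgeSet ∧ w ∈ e := by
    intro w e he
    simp only [hTdef] at he
    split_ifs at he with h
    · simp only [Finset.mem_singleton] at he
      subst he
      refine ⟨hab, ?_⟩
      rcases h with h | h <;> subst h <;> simp
    · simp at he
  have hpar : ∀ w, ((T w).card + (if w ∈ ({a} : Finset V) then 1 else 0)) % 2
      = (if w ∈ ({b} : Finset V) then 1 else 0) := by
    intro w
    have hne : a ≠ b := hab.ne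
    simp only [hTdef, Finset.mem_singleton]
    split_ifs with h h1 h2 <;> simp_all
  have hTE : ∀ w w', G.Adj w w' → (s(w, w') ∈ T w ↔ s(w, w') ∈ T w') := by
    intro w w' _
    simp only [hTdef]
    by_cases he : s(w, w') = s(a, b)
    · have h2 := he
      rw [Sym2.eq_iff] at h2
      have hw : w = a ∨ w = b := by tauto
      have hw' : w' = a ∨ w' = b := by tauto
      simp [if_pos hw, if_pos hw', he]
    · split_ifs <;> simp [he]
  refine ⟨cfiTwistIso T hT hpar hTE, fun x => rfl, fun x hxa hxb => ?_⟩
  show (x.val.1, x.val.2 ∆ T x.val.1) = x.val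
  have : T x.val.1 = ∅ := by simp [hTdef, hxa, hxb]
  rw [this, show (∅ : Finset (Sym2 V)) = ⊥ from rfl, symmDiff_bot]

lemma cfi_walk_iso {V : Type*} [DecidableEq V] {G : SimpleGraph V} {u v : V}
    (P : G.Walk u v) :
    ∃ φ : cfiGraph G {u} ≃g cfiGraph G {v},
      (∀ x : CFIVert G {u}, ((φ x) : CFIVert G {v}).val.1 = x.val.1) ∧
      ∀ x : CFIVert G {u}, x.val.1 ∉ P.support → ((φ x) : CFIVert G {v}).val = x.val := by
  induction P with
  | nil =>
    rename_i w
    exact ⟨(SimpleGraph.Iso.refl : cfiGraph G {w} ≃g _), fun x => rfl, fun x _ => rfl⟩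
  | @cons u w v h p ih =>
    obtain ⟨φ₁, hφ₁fst, hφ₁fix⟩ := ih
    obtain ⟨φ₀, hφ₀fst, hφ₀fix⟩ := cfi_edge_iso h
    refine ⟨φ₀.trans φ₁, fun x => ?_, fun x hx => ?_⟩
    · have ht : (φ₀.trans φ₁) x = φ₁ (φ₀ x) := rfl
      rw [ht, hφ₁fst, hφ₀fst]
    · simp only [SimpleGraph.Walk.support_cons, List.mem_cons] at hx
      push_neg at hx
      obtain ⟨hxu, hxp⟩ := hx
      have hxw : x.val.1 ≠ w := fun hh => hxp (hh ▸ p.start_mem_support)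
      have h0 := hφ₀fix x hxu hxw
      have ht : (φ₀.trans φ₁) x = φ₁ (φ₀ x) := rfl
      rw [ht, hφ₁fix (φ₀ x) (by rw [hφ₀fst]; exact hxp), h0]

/-- For a connected graph `G`, vertices `u, v` and a path `P` from `u` to `v`
in `G`, there is an isomorphism `φ : G_{{u}} ≃g G_{{v}}` with
`ρ(φ(w, S)) = w` for all vertices `(w, S)`, and `φ(w, S) = (w, S)` whenever
`w` does not lie on `P`. -/
theorem cfi_shift_twist_along_path {V : Type*} [DecidableEq V] [Fintype V]
    (G : SimpleGraph V) (hG : G.Connected) (u v : V)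
    (P : G.Walk u v) (hP : P.IsPath) :
    ∃ φ : cfiGraph G {u} ≃g cfiGraph G {v},
      (∀ x : CFIVert G {u}, ((φ x) : CFIVert G {v}).val.1 = x.val.1) ∧
      ∀ x : CFIVert G {u}, x.val.1 ∉ P.support → ((φ x) : CFIVert G {v}).val = x.val := by
  exact cfi_walk_iso P
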